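/- Let h ∈ ℂ with h ∉ 2πi·ℚ, q := exp(h). Let m₀ ∈ ℂ satisfy q^{2m₀+k} ≠ −1 for all k ∈ ℤ, and let ℓ ∈ ℂ be such that [ℓ+m+1] ≠ 0 and [ℓ−m] ≠ 0 for all m ∈ m₀ + ℤ. Then the generic Gelfand–Tsetlin representation V^ℓ_{m₀} is irreducible: every ℂ-linear subspace U of V = ⊕_{k∈ℤ} ℂ·e_k that is invariant under both I₂₁ and I₃₂ is either 0 or all of V. -/

import Mathlib

/-- `q^b := exp(h·b)`. -/
noncomputable def qpow (h b : ℂ) : ℂ := Complex.exp (h * b)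

/-- the q-number `[b] := (q^b − q^{−b})/(q − q^{−1})` where `q = exp h`. -/
noncomputable def qnum (h b : ℂ) : ℂ :=
  (Complex.exp (h * b) - Complex.exp (-(h * b))) / (Complex.exp h - Complex.exp (-h))

/-- The rationalized Gelfand–Tsetlin coefficient
`a_k = [ℓ+m₀+k+1][ℓ−m₀−k]/((q^{m₀+k}+q^{−(m₀+k)})(q^{m₀+k+1}+q^{−(m₀+k+1)}))`. -/
noncomputable def gtA (h ℓ m₀ : ℂ) (k : ℤ) : ℂ :=
  qnum h (ℓ + m₀ + k + 1) * qnum h (ℓ - m₀ - k) /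
    ((qpow h (m₀ + k) + qpow h (-(m₀ + k))) *
      (qpow h (m₀ + k + 1) + qpow h (-(m₀ + k + 1))))

/-- A diagonal operator applies pointwise. -/
lemma diag_apply (c : ℤ → ℂ) (D : Module.End ℂ (ℤ →₀ ℂ))
    (hD : ∀ k, D (Finsupp.single k 1) = c k • Finsupp.single k 1)
    (v : ℤ →₀ ℂ) (j : ℤ) : D v j = c j * v j := by
  have key : (Finsupp.lapply j ∘ₗ (D : (ℤ →₀ ℂ) →ₗ[ℂ] (ℤ →₀ ℂ)))
      = c j • (Finsupp.lapply j : (ℤ →₀ ℂ) →ₗ[ℂ] ℂ) := by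
    apply Finsupp.lhom_ext
    intro k b
    have hb : (Finsupp.single k b : ℤ →₀ ℂ) = b • Finsupp.single k 1 := by
      rw [Finsupp.smul_single', mul_one]
    simp only [LinearMap.comp_apply, hb, map_smul, hD, LinearMap.smul_apply]
    simp only [Finsupp.lapply_apply, Finsupp.single_apply, smul_eq_mul]
    split_ifs with hkj
    · subst hkj; ring
    · ring
  have := congrFun (congrArg (fun f => f.toFun) key) v
  simpa [Finsupp.lapply] using this

/-- From a vector in an invariant subspace of a diagonal operator with injective
eigenvalue function, every basis vector in its support lies in the subspace. -/
lemma extract (c : ℤ → ℂ) (hc : Function.Injective c)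
    (D : Module.End ℂ (ℤ →₀ ℂ))
    (hD : ∀ k, D (Finsupp.single k 1) = c k • Finsupp.single k 1)
    (U : Submodule ℂ (ℤ →₀ ℂ)) (hU : ∀ v ∈ U, D v ∈ U) :
    ∀ n : ℕ, ∀ v ∈ U, v.support.card ≤ n → ∀ j ∈ v.support,
      Finsupp.single j (1:ℂ) ∈ U := by
  intro n
  induction n with
  | zero =>
    intro v hv hcard j hj
    rw [Nat.le_zero, Finset.card_eq_zero] at hcard
    rw [hcard] at hj
    exact absurd hj (Finset.notMem_empty j)
  | succ n ih =>
    intro v hv hcard j hj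
    by_cases hs : ∃ j' ∈ v.support, j' ≠ j
    · obtain ⟨j', hj', hne⟩ := hs
      set w := D v - c j' • v with hw
      have hwU : w ∈ U := U.sub_mem (hU v hv) (U.smul_mem _ hv)
      have hwa : ∀ m, w m = (c m - c j') * v m := by
        intro m
        simp only [hw, Finsupp.sub_apply, Finsupp.smul_apply, diag_apply c D hD,
          smul_eq_mul]
        ring
      have hsub : w.support ⊆ v.support.erase j' := by
        intro m hm
        rw [Finsupp.mem_support_iff, hwa] at hm
        rw [Finset.mem_erase, Finsupp.mem_support_iff]
        refine ⟨?_, fun h0 => hm (by rw [h0]; ring)⟩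
        rintro rfl
        exact hm (by ring)
      have hjw : j ∈ w.support := by
        rw [Finsupp.mem_support_iff, hwa]
        exact mul_ne_zero (sub_ne_zero.mpr (fun he => hne (hc he).symm))
          (Finsupp.mem_support_iff.mp hj)
      have hcard' : w.support.card ≤ n := by
        have h1 : w.support.card ≤ (v.support.erase j').card := Finset.card_le_card hsub
        have h2 : (v.support.erase j').card = v.support.card - 1 :=
          Finset.card_erase_of_mem hj'
        have h3 : 1 ≤ v.support.card := Finset.card_pos.mpr ⟨j, hj⟩
        omega
      exact ih w hwU hcard' j hjw
    · push_neg at hs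
      have hvj : v j ≠ 0 := Finsupp.mem_support_iff.mp hj
      have hveq : v = Finsupp.single j (v j) := by
        ext m
        by_cases hm : m = j
        · subst hm; rw [Finsupp.single_apply, if_pos rfl]
        · have hms : m ∉ v.support := fun hmm => hm (hs m hmm)
          rw [Finsupp.notMem_support_iff] at hms
          rw [hms, Finsupp.single_apply, if_neg (fun hjm => hm hjm.symm)]
      have h2 : Finsupp.single j (1:ℂ) = (v j)⁻¹ • Finsupp.single j (v j) := by
        rw [Finsupp.smul_single, smul_eq_mul, inv_mul_cancel₀ hvj]
      rw [h2, ← hveq]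
      exact U.smul_mem _ hv

lemma denom_ne (h m₀ : ℂ) (hm : ∀ k : ℤ, qpow h (2 * m₀ + k) ≠ -1) (k : ℤ) :
    qpow h (m₀ + k) + qpow h (-(m₀ + k)) ≠ 0 := by
  intro h0
  apply hm (2 * k)
  have hprod : qpow h (m₀ + k) * qpow h (-(m₀ + k)) = 1 := by
    unfold qpow
    rw [← Complex.exp_add, mul_neg, add_neg_cancel, Complex.exp_zero]
  have hB : qpow h (-(m₀ + (k:ℂ))) = -qpow h (m₀ + k) := eq_neg_of_add_eq_zero_right h0
  have hsq : qpow h (2 * m₀ + ((2 * k : ℤ) : ℂ)) = qpow h (m₀ + k) * qpow h (m₀ + k) := by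
    unfold qpow
    rw [← Complex.exp_add]
    congr 1
    push_cast
    ring
  rw [hsq]
  rw [hB] at hprod
  linear_combination -hprod

lemma c_inj (h : ℂ) (hh : ∀ r : ℚ, h ≠ 2 * Real.pi * Complex.I * r)
    (m₀ : ℂ) (hm : ∀ k : ℤ, qpow h (2 * m₀ + k) ≠ -1) :
    Function.Injective (fun k : ℤ => Complex.I * qnum h (m₀ + k)) := by
  intro j k hjk
  by_contra hne
  simp only at hjk
  have hq : qnum h (m₀ + j) = qnum h (m₀ + k) := mul_left_cancel₀ Complex.I_ne_zero hjk
  have hden : Complex.exp h - Complex.exp (-h) ≠ 0 := by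
    intro h0
    have he : Complex.exp h = Complex.exp (-h) := sub_eq_zero.mp h0
    rw [Complex.exp_eq_exp_iff_exists_int] at he
    obtain ⟨n, hn⟩ := he
    exact hh ((n : ℚ) / 2) (by push_cast; linear_combination hn / 2)
  unfold qnum at hq
  have hnum : Complex.exp (h * (m₀ + j)) - Complex.exp (-(h * (m₀ + j)))
      = Complex.exp (h * (m₀ + k)) - Complex.exp (-(h * (m₀ + k))) := by
    rw [div_eq_div_iff hden hden] at hq
    exact mul_right_cancel₀ hden hq
  set x := Complex.exp (h * (m₀ + j)) with hx
  set y := Complex.exp (h * (m₀ + k)) with hy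
  set e := Complex.exp (-(h * (m₀ + j))) with he
  set f := Complex.exp (-(h * (m₀ + k))) with hf
  have hxe : x * e = 1 := by rw [hx, he, ← Complex.exp_add, add_neg_cancel, Complex.exp_zero]
  have hyf : y * f = 1 := by rw [hy, hf, ← Complex.exp_add, add_neg_cancel, Complex.exp_zero]
  have key : (x - y) * (x * y + 1) = 0 := by
    linear_combination x * y * hnum + y * hxe - x * hyf
  rcases mul_eq_zero.mp key with h1 | h2
  · have hxy : x = y := sub_eq_zero.mp h1
    rw [hx, hy, Complex.exp_eq_exp_iff_exists_int] at hxy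
    obtain ⟨n, hn⟩ := hxy
    have hjk' : ((j : ℂ) - k) ≠ 0 := by
      rw [sub_ne_zero]
      exact_mod_cast hne
    have hjkq : ((j : ℚ) - k) ≠ 0 := by
      rw [sub_ne_zero]
      exact_mod_cast hne
    have hh2 : h * ((j : ℂ) - k) = n * (2 * Real.pi * Complex.I) := by
      linear_combination hn
    apply hh ((n : ℚ) / ((j : ℚ) - k))
    push_cast
    rw [mul_div_assoc', eq_div_iff hjk']
    linear_combination hh2
  · have hxy : x * y = -1 := eq_neg_of_add_eq_zero_left h2
    apply hm (j + k)
    have : qpow h (2 * m₀ + ((j + k : ℤ) : ℂ)) = x * y := by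
      rw [hx, hy]
      unfold qpow
      rw [← Complex.exp_add]
      congr 1
      push_cast
      ring
    rw [this, hxy]

lemma gtA_ne (h ℓ m₀ : ℂ) (hm : ∀ k : ℤ, qpow h (2 * m₀ + k) ≠ -1)
    (hl1 : ∀ k : ℤ, qnum h (ℓ + (m₀ + k) + 1) ≠ 0)
    (hl2 : ∀ k : ℤ, qnum h (ℓ - (m₀ + k)) ≠ 0) (k : ℤ) : gtA h ℓ m₀ k ≠ 0 := by
  unfold gtA
  apply div_ne_zero
  · apply mul_ne_zero
    · have e : ℓ + m₀ + (k:ℂ) + 1 = ℓ + (m₀ + k) + 1 := by ring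
      rw [e]; exact hl1 k
    · have e : ℓ - m₀ - (k:ℂ) = ℓ - (m₀ + k) := by ring
      rw [e]; exact hl2 k
  · refine mul_ne_zero (denom_ne h m₀ hm k) ?_
    have h2 := denom_ne h m₀ hm (k + 1)
    have e : (m₀ + ((k + 1 : ℤ) : ℂ)) = m₀ + k + 1 := by push_cast; ring
    rw [e] at h2
    exact h2

theorem stmt_9 (h : ℂ) (hh : ∀ r : ℚ, h ≠ 2 * Real.pi * Complex.I * r)
    (ℓ m₀ : ℂ) (hm : ∀ k : ℤ, qpow h (2 * m₀ + k) ≠ -1)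
    (hl1 : ∀ k : ℤ, qnum h (ℓ + (m₀ + k) + 1) ≠ 0)
    (hl2 : ∀ k : ℤ, qnum h (ℓ - (m₀ + k)) ≠ 0)
    (I21 I32 : Module.End ℂ (ℤ →₀ ℂ))
    (hI21 : ∀ k : ℤ, I21 (Finsupp.single k 1) =
      (Complex.I * qnum h (m₀ + k)) • Finsupp.single k 1)
    (hI32 : ∀ k : ℤ, I32 (Finsupp.single k 1) =
      gtA h ℓ m₀ k • Finsupp.single (k + 1) 1 - Finsupp.single (k - 1) 1)
    (U : Submodule ℂ (ℤ →₀ ℂ))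
    (hU21 : ∀ v ∈ U, I21 v ∈ U) (hU32 : ∀ v ∈ U, I32 v ∈ U) :
    U = ⊥ ∨ U = ⊤ := by
  by_cases hbot : U = ⊥
  · exact Or.inl hbot
  right
  obtain ⟨v, hv, hv0⟩ := Submodule.ne_bot_iff U |>.mp hbot
  have hc := c_inj h hh m₀ hm
  have hext := extract _ hc I21 hI21 U hU21
  -- stepping via I32
  have step : ∀ k : ℤ, Finsupp.single k (1:ℂ) ∈ U →
      Finsupp.single (k + 1) (1:ℂ) ∈ U ∧ Finsupp.single (k - 1) (1:ℂ) ∈ U := by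
    intro k hk
    have hwU : I32 (Finsupp.single k 1) ∈ U := hU32 _ hk
    set w := I32 (Finsupp.single k 1) with hwdef
    have hweq : w = gtA h ℓ m₀ k • Finsupp.single (k + 1) 1 - Finsupp.single (k - 1) 1 :=
      hI32 k
    have hga := gtA_ne h ℓ m₀ hm hl1 hl2 k
    have h1 : w (k + 1) = gtA h ℓ m₀ k := by
      rw [hweq]
      simp only [Finsupp.sub_apply, Finsupp.smul_apply, Finsupp.single_apply, smul_eq_mul]
      simp [show ¬(k - 1 = k + 1) by omega]
    have h2 : w (k - 1) = -1 := by
      rw [hweq]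
      simp only [Finsupp.sub_apply, Finsupp.smul_apply, Finsupp.single_apply, smul_eq_mul]
      simp [show ¬(k + 1 = k - 1) by omega]
    exact ⟨hext w.support.card w hwU le_rfl (k + 1)
        (Finsupp.mem_support_iff.mpr (by rw [h1]; exact hga)),
      hext w.support.card w hwU le_rfl (k - 1)
        (Finsupp.mem_support_iff.mpr (by rw [h2]; norm_num))⟩
  obtain ⟨j, hj⟩ : v.support.Nonempty := Finsupp.support_nonempty_iff.mpr hv0
  have hj1 : Finsupp.single j (1:ℂ) ∈ U := hext v.support.card v hv le_rfl j hj
  have hall : ∀ d : ℤ, Finsupp.single (j + d) (1:ℂ) ∈ U := by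
    intro d
    induction d using Int.induction_on with
    | zero => simpa using hj1
    | succ n ihn =>
      have e : j + ((n : ℤ) + 1) = (j + n) + 1 := by ring
      rw [e]
      exact (step _ ihn).1
    | pred n ihn =>
      have e : j + (-(n : ℤ) - 1) = (j + -(n : ℤ)) - 1 := by ring
      rw [e]
      exact (step _ ihn).2
  have hallk : ∀ k : ℤ, Finsupp.single k (1:ℂ) ∈ U := by
    intro k
    have := hall (k - j)
    rwa [add_sub_cancel] at this
  rw [Submodule.eq_top_iff']
  intro x
  rw [← Finsupp.sum_single x]
  refine Submodule.finsuppSum_mem ℂ U _ _ fun k _ => ?_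
  have : Finsupp.single k (x k) = (x k) • Finsupp.single k (1:ℂ) := by
    rw [Finsupp.smul_single', mul_one]
  rw [this]
  exact U.smul_mem _ (hallk k)
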